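/- Let A be a *-algebra with a locally convex topology making it a locally convex *-algebra, ε: A → ℂ a continuous *-character, and suppose A has a bounded (two-sided) approximate identity {e_i}. Let Φ: A → L(H) be a continuous *-representation on a Hilbert space H and θ: A → H a continuous (Φ, ε)-derivation. Let H_Φ be the closure of Φ(A)H, P: H → H_Φ the orthogonal projection, and Φ₀ the non-degenerate subrepresentation on H_Φ. If there exists ξ₀ ∈ H_Φ with P(θ(a)) = ε(a)ξ₀ − Φ₀(a)ξ₀ for all a ∈ A, then θ itself is inner: there exists ξ ∈ H with θ(a) = ε(a)ξ − Φ(a)ξ for all a ∈ A. -/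

import Mathlib

open Filter Topology

/-- Let `A` be a locally convex `*`-algebra with a bounded approximate identity,
`ε` a continuous `*`-character, `Φ` a continuous `*`-representation on a Hilbert space `H`,
`θ` a continuous `(Φ, ε)`-derivation, `S = closure(span Φ(A)H)`. If there is `ξ₀ ∈ S` with
`P(θ a) = ε(a)ξ₀ − Φ(a)ξ₀` for all `a` (i.e. `θ a − (ε(a)ξ₀ − Φ(a)ξ₀) ⊥ S`), then `θ` is
inner. -/
theorem stmt18 {A H ι : Type*} [Ring A] [Algebra ℂ A] [StarRing A] [StarModule ℂ A]
    [TopologicalSpace A] [IsTopologicalAddGroup A] [ContinuousSMul ℂ A]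
    [NormedAddCommGroup H] [InnerProductSpace ℂ H] [CompleteSpace H]
    [Nonempty ι] [SemilatticeSup ι]
    (ε : A →ₗ[ℂ] ℂ) (hεc : Continuous ε) (hεm : ∀ a b : A, ε (a * b) = ε a * ε b)
    (hεs : ∀ a : A, ε (star a) = (starRingEnd ℂ) (ε a)) (hε0 : ε ≠ 0)
    (e : ι → A) (hebdd : Bornology.IsVonNBounded ℂ (Set.range e))
    (heai : ∀ a : A, Tendsto (fun i => e i * a) atTop (nhds a) ∧
      Tendsto (fun i => a * e i) atTop (nhds a))
    (Φ : A →ₗ[ℂ] (H →L[ℂ] H)) (hΦc : Continuous fun a => Φ a)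
    (hΦm : ∀ a b : A, Φ (a * b) = (Φ a).comp (Φ b))
    (hΦs : ∀ a : A, Φ (star a) = ContinuousLinearMap.adjoint (Φ a))
    (θ : A →ₗ[ℂ] H) (hθc : Continuous θ)
    (hθ : ∀ a b : A, θ (a * b) = Φ a (θ b) + ε b • θ a)
    (S : Submodule ℂ H)
    (hS : S = (Submodule.span ℂ {y : H | ∃ (a : A) (x : H), y = Φ a x}).topologicalClosure)
    (ξ₀ : H) (hξ₀ : ξ₀ ∈ S)
    (hinner : ∀ a : A, θ a - (ε a • ξ₀ - Φ a ξ₀) ∈ Sᗮ) :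
    ∃ ξ : H, ∀ a : A, θ a = ε a • ξ - Φ a ξ := by
  -- Φ a kills Sᗮ
  classical
  have hkill : ∀ (a : A) (η : H), η ∈ Sᗮ → Φ a η = 0 := by
    intro a η hη
    have hmem : Φ (star a) (Φ a η) ∈ S := by
      rw [hS]
      exact Submodule.le_topologicalClosure _
        (Submodule.subset_span ⟨star a, Φ a η, rfl⟩)
    have h0 : (inner ℂ (Φ (star a) (Φ a η)) η : ℂ) = 0 :=
      (Submodule.mem_orthogonal S η).mp hη _ hmem
    rw [hΦs, ContinuousLinearMap.adjoint_inner_left] at h0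
    exact inner_self_eq_zero.mp h0
  -- the perpendicular part
  set f : A → H := fun a => θ a - (ε a • ξ₀ - Φ a ξ₀) with hf
  have hfc : Continuous f := by
    apply hθc.sub
    exact ((hεc.smul continuous_const).sub (hΦc.clm_apply continuous_const))
  have hfmul : ∀ a b : A, f (a * b) = ε b • f a + Φ a (f b) := by
    intro a b
    simp only [hf, map_mul, hεm, hθ, hΦm, ContinuousLinearMap.comp_apply,
      map_sub, map_smul, smul_sub, mul_smul]
    module
  -- choose a₀ with ε a₀ = 1
  obtain ⟨a', ha'⟩ : ∃ a : A, ε a ≠ 0 := by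
    by_contra h
    push_neg at h
    exact hε0 (LinearMap.ext fun a => h a)
  set a₀ : A := (ε a')⁻¹ • a' with ha₀
  have hεa₀ : ε a₀ = 1 := by
    simp [ha₀, inv_mul_cancel₀ ha']
  -- f (e i) → f a₀
  have hlim : ∀ a : A, Tendsto (fun i => f (e i * a)) atTop (nhds (f a)) :=
    fun a => hfc.continuousAt.tendsto.comp (heai a).1
  have hlim₀ : Tendsto (fun i => f (e i)) atTop (nhds (f a₀)) := by
    have := hlim a₀
    simp only [hfmul, hεa₀, one_smul, hkill _ (f a₀) (hinner a₀), add_zero] at this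
    exact this
  -- f a = ε a • f a₀
  have hkey : ∀ a : A, f a = ε a • f a₀ := by
    intro a
    have h1 : Tendsto (fun i => f (e i * a)) atTop (nhds (ε a • f a₀)) := by
      have : (fun i => f (e i * a)) = fun i => ε a • f (e i) := by
        funext i
        rw [hfmul, hkill _ _ (hinner a), add_zero]
      rw [this]
      exact hlim₀.const_smul _
    exact tendsto_nhds_unique (hlim a) h1
  refine ⟨ξ₀ + f a₀, fun a => ?_⟩
  have hthis := hkey a
  have hk := hkill a _ (hinner a₀)
  simp only [hf] at hthis hk ⊢
  rw [map_add, hk, add_zero, smul_add]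
  linear_combination (norm := module) hthis
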